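/- Let α̃ be a real number that is not an integer and let Γ denote the real Gamma function. For all natural numbers k ≤ n one has Σ_{i=k}^{n} [(−1)^{n−i} · Γ(α̃+1)/((n−i)! · Γ(α̃ − n + i + 1))] · [(−1)^{i−k} · Γ(−α̃+1)/((i−k)! · Γ(−α̃ − i + k + 1))] = 1 if n = k and = 0 if k < n. Equivalently, the lower-triangular matrices Δ^{α̃} and Δ^{−α̃}, with entries (Δ^{±α̃})(n,k) = (−1)^{n−k} · Γ(±α̃+1)/((n−k)! · Γ(±α̃ − n + k + 1)) for k ≤ n and 0 for k > n, are mutually inverse. -/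

import Mathlib

open Finset Polynomial

private lemma gamma_desc (α : ℝ) (hα : ∀ m : ℤ, α ≠ (m : ℝ)) (m : ℕ) :
    Real.Gamma (α + 1) = (descPochhammer ℤ m).smeval α * Real.Gamma (α - m + 1) := by
  induction m with
  | zero => simp [descPochhammer_zero]
  | succ m ih =>
    have h1 : α - m ≠ 0 := by
      intro h
      exact hα m (by push_cast; linarith)
    have : Real.Gamma (α - m + 1) = (α - m) * Real.Gamma (α - m) := Real.Gamma_add_one h1
    rw [ih, this, descPochhammer_succ_right]
    have : (α - ((m : ℕ) + 1 : ℕ) + 1 : ℝ) = α - m := by push_cast; ring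
    rw [this]
    simp [Polynomial.smeval_mul, Polynomial.smeval_sub, Polynomial.smeval_X,
      Polynomial.smeval_natCast]
    ring

private lemma gamma_ne (α : ℝ) (hα : ∀ m : ℤ, α ≠ (m : ℝ)) (m : ℕ) :
    Real.Gamma (α - m + 1) ≠ 0 := by
  refine Real.Gamma_ne_zero fun j h => ?_
  exact hα (m - 1 - j) (by push_cast; linarith)

private lemma entry_eq (α : ℝ) (hα : ∀ m : ℤ, α ≠ (m : ℝ)) (m : ℕ) :
    Real.Gamma (α + 1) / ((Nat.factorial m : ℝ) * Real.Gamma (α - m + 1))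
      = Ring.choose α m := by
  have h := Ring.descPochhammer_eq_factorial_smul_choose (R := ℝ) α m
  rw [gamma_desc α hα m, h]
  rw [nsmul_eq_mul]
  have h1 : (Nat.factorial m : ℝ) ≠ 0 := Nat.cast_ne_zero.mpr (Nat.factorial_ne_zero m)
  have h2 := gamma_ne α hα m
  field_simp

private lemma key (α : ℝ) (hα : ∀ m : ℤ, α ≠ (m : ℝ)) (n k : ℕ) (hkn : k ≤ n) :
    (∑ i ∈ Finset.Icc k n,
        ((-1 : ℝ) ^ (n - i) *
            (Real.Gamma (α + 1) /
              ((Nat.factorial (n - i) : ℝ) * Real.Gamma (α - (n : ℝ) + (i : ℝ) + 1)))) *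
          ((-1 : ℝ) ^ (i - k) *
            (Real.Gamma (-α + 1) /
              ((Nat.factorial (i - k) : ℝ) * Real.Gamma (-α - (i : ℝ) + (k : ℝ) + 1)))))
        = if n = k then 1 else 0 := by
  have hα' : ∀ m : ℤ, -α ≠ (m : ℝ) := by
    intro m h
    exact hα (-m) (by push_cast; linarith)
  have step : ∀ i ∈ Finset.Icc k n,
      ((-1 : ℝ) ^ (n - i) *
            (Real.Gamma (α + 1) /
              ((Nat.factorial (n - i) : ℝ) * Real.Gamma (α - (n : ℝ) + (i : ℝ) + 1)))) *
          ((-1 : ℝ) ^ (i - k) *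
            (Real.Gamma (-α + 1) /
              ((Nat.factorial (i - k) : ℝ) * Real.Gamma (-α - (i : ℝ) + (k : ℝ) + 1))))
        = (-1 : ℝ) ^ (n - k) * (Ring.choose α (n - i) * Ring.choose (-α) (i - k)) := by
    intro i hi
    simp only [Finset.mem_Icc] at hi
    have c1 : (α - (n : ℝ) + (i : ℝ) + 1) = α - ((n - i : ℕ) : ℝ) + 1 := by
      rw [Nat.cast_sub hi.2]; ring
    have c2 : (-α - (i : ℝ) + (k : ℝ) + 1) = -α - ((i - k : ℕ) : ℝ) + 1 := by
      rw [Nat.cast_sub hi.1]; ring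
    rw [c1, c2, entry_eq α hα (n - i), entry_eq (-α) hα' (i - k)]
    have : (-1 : ℝ) ^ (n - i) * (-1 : ℝ) ^ (i - k) = (-1 : ℝ) ^ (n - k) := by
      rw [← pow_add]
      congr 1
      omega
    rw [show ((-1:ℝ) ^ (n-i) * Ring.choose α (n-i)) * ((-1:ℝ)^(i-k) * Ring.choose (-α) (i-k))
        = ((-1:ℝ)^(n-i) * (-1:ℝ)^(i-k)) * (Ring.choose α (n-i) * Ring.choose (-α) (i-k)) by ring,
      this]
  rw [Finset.sum_congr rfl step, ← Finset.mul_sum]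
  have reindex : ∑ i ∈ Finset.Icc k n, Ring.choose α (n - i) * Ring.choose (-α) (i - k)
      = ∑ ij ∈ antidiagonal (n - k), Ring.choose α ij.1 * Ring.choose (-α) ij.2 := by
    refine Finset.sum_nbij' (fun i => (n - i, i - k)) (fun ij => k + ij.2) ?_ ?_ ?_ ?_ ?_
    · intro i hi
      simp only [Finset.mem_Icc] at hi
      simp only [HasAntidiagonal.mem_antidiagonal]
      omega
    · intro ij hij
      simp only [HasAntidiagonal.mem_antidiagonal] at hij
      simp only [Finset.mem_Icc]
      omega
    · intro i hi
      simp only [Finset.mem_Icc] at hi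
      dsimp only
      omega
    · intro ij hij
      simp only [HasAntidiagonal.mem_antidiagonal] at hij
      have : n - (k + ij.2) = ij.1 := by omega
      simp [this]
    · intro i hi; rfl
  rw [reindex, ← Ring.add_choose_eq _ (Commute.all _ _), add_neg_cancel,
    Ring.choose_zero_ite]
  rcases eq_or_ne n k with h | h
  · subst h; simp
  · have : n - k ≠ 0 := by omega
    simp [h, this]

/-- For a real number α̃ that is not an integer, the lower-triangular
matrices `Δ^{α̃}` and `Δ^{−α̃}`, with entries
`(Δ^{±α̃})(n,k) = (−1)^{n−k} · Γ(±α̃+1)/((n−k)! · Γ(±α̃ − n + k + 1))` for `k ≤ n`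
(and `0` for `k > n`), are mutually inverse: for all `k ≤ n`,
`Σ_{i=k}^{n} (Δ^{α̃})(n,i) · (Δ^{−α̃})(i,k) = δ_{n,k}` and likewise with the two
factors interchanged. -/
theorem fractional_difference_matrix_mutually_inverse
    (α : ℝ) (hα : ∀ m : ℤ, α ≠ (m : ℝ)) :
    ∀ n k : ℕ, k ≤ n →
      ((∑ i ∈ Finset.Icc k n,
          ((-1 : ℝ) ^ (n - i) *
              (Real.Gamma (α + 1) /
                ((Nat.factorial (n - i) : ℝ) * Real.Gamma (α - (n : ℝ) + (i : ℝ) + 1)))) *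
            ((-1 : ℝ) ^ (i - k) *
              (Real.Gamma (-α + 1) /
                ((Nat.factorial (i - k) : ℝ) * Real.Gamma (-α - (i : ℝ) + (k : ℝ) + 1)))))
          = if n = k then 1 else 0) ∧
      ((∑ i ∈ Finset.Icc k n,
          ((-1 : ℝ) ^ (n - i) *
              (Real.Gamma (-α + 1) /
                ((Nat.factorial (n - i) : ℝ) * Real.Gamma (-α - (n : ℝ) + (i : ℝ) + 1)))) *
            ((-1 : ℝ) ^ (i - k) *
              (Real.Gamma (α + 1) /
                ((Nat.factorial (i - k) : ℝ) * Real.Gamma (α - (i : ℝ) + (k : ℝ) + 1)))))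
          = if n = k then 1 else 0) := by
  intro n k hkn
  have hα' : ∀ m : ℤ, -α ≠ (m : ℝ) := by
    intro m h
    exact hα (-m) (by push_cast; linarith)
  refine ⟨key α hα n k hkn, ?_⟩
  have := key (-α) hα' n k hkn
  simpa using this
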